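/- For nonnegative reals $w_i$ and nonnegative size parameters: given a partition of $[n]$ into $A$ and $B$, with values $v_i\ge 0$ for $i\in A$ and $\mu_j \ge 0$ for $j\in B$, the cross-term $\sum_{i\in A, j\in B} \min(w_j v_i, w_i \mu_j)$ is at most $\sum_{i,j\in A, j\ge i} \min(w_j v_i, w_i v_j) + \sum_{i,j\in B, j\ge i} \min(w_j \mu_i, w_i \mu_j)$. -/

import Mathlib

open Finset

/-- The min kernel is positive semidefinite (quadratic form version). -/
lemma psd_min {n : ℕ} (a : Fin n → ℝ) :
    ∀ (k : ℕ) (S : Finset (Fin n)) (t : Fin n → ℝ), S.card = k →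
      (∀ i ∈ S, 0 ≤ t i) →
      0 ≤ ∑ i ∈ S, ∑ j ∈ S, a i * a j * min (t i) (t j) := by
  intro k
  induction k with
  | zero =>
    intro S t hcard ht
    rw [Finset.card_eq_zero.mp hcard]; simp
  | succ k ih =>
    intro S t hcard ht
    have hne : S.Nonempty := Finset.card_pos.mp (by omega)
    obtain ⟨i₀, hi₀, hmin⟩ := S.exists_min_image t hne
    set m := t i₀ with hm
    have hm0 : 0 ≤ m := ht i₀ hi₀
    have key : ∀ i ∈ S, ∀ j ∈ S, a i * a j * min (t i) (t j)
        = m * (a i * a j) + a i * a j * min (t i - m) (t j - m) := by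
      intro i hi j hj
      have h : min (t i - m) (t j - m) = min (t i) (t j) - m := by
        rw [← min_sub_sub_right]
      rw [h]; ring
    have hsplit : ∑ i ∈ S, ∑ j ∈ S, a i * a j * min (t i) (t j)
        = (∑ i ∈ S, ∑ j ∈ S, m * (a i * a j))
          + ∑ i ∈ S, ∑ j ∈ S, a i * a j * min (t i - m) (t j - m) := by
      rw [← Finset.sum_add_distrib]
      refine Finset.sum_congr rfl fun i hi => ?_
      rw [← Finset.sum_add_distrib]
      exact Finset.sum_congr rfl fun j hj => key i hi j hj
    rw [hsplit]
    have h1 : 0 ≤ ∑ i ∈ S, ∑ j ∈ S, m * (a i * a j) := by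
      have heq : ∑ i ∈ S, ∑ j ∈ S, m * (a i * a j)
          = m * ((∑ i ∈ S, a i) * (∑ i ∈ S, a i)) := by
        rw [Finset.sum_mul_sum, Finset.mul_sum]
        exact Finset.sum_congr rfl fun i _ => by rw [Finset.mul_sum]
      rw [heq]
      exact mul_nonneg hm0 (mul_self_nonneg _)
    have h2 : 0 ≤ ∑ i ∈ S, ∑ j ∈ S, a i * a j * min (t i - m) (t j - m) := by
      set S' := S.erase i₀ with hS'
      have hSins : S = insert i₀ S' := (Finset.insert_erase hi₀).symm
      have hnm : i₀ ∉ S' := Finset.notMem_erase _ _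
      have hzero : ∀ j ∈ S, min (t i₀ - m) (t j - m) = 0 := by
        intro j hj
        have h0 : t i₀ - m = 0 := by simp [hm]
        have hge : (0:ℝ) ≤ t j - m := by linarith [hmin j hj]
        rw [h0]
        exact min_eq_left hge
      have hrow : ∑ j ∈ S, a i₀ * a j * min (t i₀ - m) (t j - m) = 0 :=
        Finset.sum_eq_zero fun j hj => by rw [hzero j hj, mul_zero]
      have hcol : ∀ i ∈ S', ∑ j ∈ S, a i * a j * min (t i - m) (t j - m)
          = ∑ j ∈ S', a i * a j * min (t i - m) (t j - m) := by
        intro i hi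
        rw [hSins, Finset.sum_insert hnm]
        have : min (t i - m) (t i₀ - m) = 0 := by
          rw [min_comm]
          exact hzero i (Finset.mem_of_mem_erase hi)
        rw [this, mul_zero, zero_add]
      calc (0:ℝ) ≤ ∑ i ∈ S', ∑ j ∈ S', a i * a j * min (t i - m) (t j - m) := by
            refine ih S' (fun i => t i - m) ?_ ?_
            · rw [hS', Finset.card_erase_of_mem hi₀, hcard]; omega
            · intro i hi
              have := hmin i (Finset.mem_of_mem_erase hi)
              show 0 ≤ t i - m
              linarith
        _ = ∑ i ∈ S, ∑ j ∈ S, a i * a j * min (t i - m) (t j - m) := by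
            conv_rhs => rw [hSins, Finset.sum_insert hnm]
            rw [← hSins, hrow, zero_add]
            exact (Finset.sum_congr rfl hcol).symm
    linarith

/-- Symmetric nonneg double sum bounded by twice the upper-triangular sum. -/
lemma sym_le {n : ℕ} (S : Finset (Fin n)) (f : Fin n → Fin n → ℝ)
    (hsym : ∀ i j, f i j = f j i) (hnn : ∀ i j, 0 ≤ f i j) :
    ∑ i ∈ S, ∑ j ∈ S, f i j ≤ 2 * ∑ i ∈ S, ∑ j ∈ S.filter (fun j => i ≤ j), f i j := by
  have hsplit : ∑ i ∈ S, ∑ j ∈ S, f i j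
      = (∑ i ∈ S, ∑ j ∈ S.filter (fun j => i ≤ j), f i j)
        + ∑ i ∈ S, ∑ j ∈ S.filter (fun j => j < i), f i j := by
    rw [← Finset.sum_add_distrib]
    refine Finset.sum_congr rfl fun i hi => ?_
    rw [← Finset.sum_filter_add_sum_filter_not S (fun j => i ≤ j)]
    congr 1
    apply Finset.sum_congr _ fun _ _ => rfl
    ext j; simp [not_le]
  have hswap : ∑ i ∈ S, ∑ j ∈ S.filter (fun j => j < i), f i j
      = ∑ i ∈ S, ∑ j ∈ S.filter (fun j => i < j), f i j := by
    rw [Finset.sum_comm' (t' := S) (s' := fun j => S.filter (fun i => j < i))]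
    · exact Finset.sum_congr rfl fun i _ => Finset.sum_congr rfl fun j _ => hsym j i
    · intro i j
      simp only [Finset.mem_filter]
      tauto
  have hle : ∑ i ∈ S, ∑ j ∈ S.filter (fun j => i < j), f i j
      ≤ ∑ i ∈ S, ∑ j ∈ S.filter (fun j => i ≤ j), f i j := by
    refine Finset.sum_le_sum fun i _ => ?_
    refine Finset.sum_le_sum_of_subset_of_nonneg ?_ fun j _ _ => hnn i j
    intro j hj
    simp only [Finset.mem_filter] at *
    exact ⟨hj.1, le_of_lt hj.2⟩
  linarith [hsplit, hswap, hle]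

/-- Cross-term bound: the interaction term between probed jobs `A` (with realized
sizes `v`) and unprobed jobs `B` (with expected sizes `μ`) is bounded by the sum of
the within-part terms. -/
theorem cross_term_bound {n : ℕ} (w v μ : Fin n → ℝ)
    (hw : ∀ i, 0 ≤ w i) (hv : ∀ i, 0 ≤ v i) (hμ : ∀ i, 0 ≤ μ i)
    (A B : Finset (Fin n)) (hdisj : Disjoint A B) (hcover : A ∪ B = Finset.univ) :
    ∑ i ∈ A, ∑ j ∈ B, min (w j * v i) (w i * μ j) ≤
    (∑ i ∈ A, ∑ j ∈ A.filter (fun j => i ≤ j), min (w j * v i) (w i * v j)) +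
    (∑ i ∈ B, ∑ j ∈ B.filter (fun j => i ≤ j), min (w j * μ i) (w i * μ j)) := by
  classical
  set x : Fin n → ℝ := fun i => if i ∈ A then v i else μ i with hx
  set t : Fin n → ℝ := fun i => if w i = 0 then 0 else x i / w i with htdef
  have hx0 : ∀ i, 0 ≤ x i := fun i => by
    by_cases h : i ∈ A <;> simp [hx, h, hv i, hμ i]
  have ht0 : ∀ i, 0 ≤ t i := fun i => by
    by_cases h : w i = 0
    · simp [htdef, h]
    · simp only [htdef, h, if_false]
      exact div_nonneg (hx0 i) (hw i)
  set M : Fin n → Fin n → ℝ := fun i j => w i * w j * min (t i) (t j) with hM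
  have hMsym : ∀ i j, M i j = M j i := by
    intro i j; simp only [hM]; rw [min_comm]; ring
  have hMnn : ∀ i j, 0 ≤ M i j := fun i j =>
    mul_nonneg (mul_nonneg (hw i) (hw j)) (le_min (ht0 i) (ht0 j))
  have hMeq : ∀ i j, min (w j * x i) (w i * x j) = M i j := by
    intro i j
    by_cases hi : w i = 0
    · have : min (w j * x i) (w i * x j) = 0 := by
        rw [hi, zero_mul]
        exact min_eq_right (mul_nonneg (hw j) (hx0 i))
      rw [this]; simp [hM, hi]
    by_cases hj : w j = 0
    · have : min (w j * x i) (w i * x j) = 0 := by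
        rw [hj, zero_mul]
        exact min_eq_left (mul_nonneg (hw i) (hx0 j))
      rw [this]; simp [hM, hj]
    · have hti : t i = x i / w i := by simp [htdef, hi]
      have htj : t j = x j / w j := by simp [htdef, hj]
      have hwi : (0:ℝ) < w i := lt_of_le_of_ne (hw i) (Ne.symm hi)
      have hwj : (0:ℝ) < w j := lt_of_le_of_ne (hw j) (Ne.symm hj)
      simp only [hM, hti, htj]
      rw [mul_min_of_nonneg _ _ (mul_nonneg (hw i) (hw j))]
      congr 1 <;> field_simp <;> ring
  have hxA : ∀ i ∈ A, x i = v i := fun i hi => by simp [hx, hi]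
  have hxB : ∀ i ∈ B, x i = μ i := fun i hi => by
    simp [hx, Finset.disjoint_right.mp hdisj hi]
  -- rewrite the three sums in terms of M
  have e1 : ∑ i ∈ A, ∑ j ∈ B, min (w j * v i) (w i * μ j)
      = ∑ i ∈ A, ∑ j ∈ B, M i j := by
    refine Finset.sum_congr rfl fun i hi => Finset.sum_congr rfl fun j hj => ?_
    rw [← hxA i hi, ← hxB j hj, hMeq]
  have e2 : ∑ i ∈ A, ∑ j ∈ A.filter (fun j => i ≤ j), min (w j * v i) (w i * v j)
      = ∑ i ∈ A, ∑ j ∈ A.filter (fun j => i ≤ j), M i j := by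
    refine Finset.sum_congr rfl fun i hi => Finset.sum_congr rfl fun j hj => ?_
    rw [← hxA i hi, ← hxA j (Finset.mem_of_mem_filter _ hj), hMeq]
  have e3 : ∑ i ∈ B, ∑ j ∈ B.filter (fun j => i ≤ j), min (w j * μ i) (w i * μ j)
      = ∑ i ∈ B, ∑ j ∈ B.filter (fun j => i ≤ j), M i j := by
    refine Finset.sum_congr rfl fun i hi => Finset.sum_congr rfl fun j hj => ?_
    rw [← hxB i hi, ← hxB j (Finset.mem_of_mem_filter _ hj), hMeq]
  rw [e1, e2, e3]
  -- positive semidefiniteness, with signed weights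
  set a : Fin n → ℝ := fun i => (if i ∈ A then 1 else -1) * w i with ha
  have hpsd := psd_min a Finset.univ.card Finset.univ t rfl (fun i _ => ht0 i)
  have hsplitU : ∀ g : Fin n → ℝ, ∑ i ∈ Finset.univ, g i = ∑ i ∈ A, g i + ∑ i ∈ B, g i := by
    intro g; rw [← hcover, Finset.sum_union hdisj]
  have hnB : ∀ j ∈ B, j ∉ A := fun j hj => Finset.disjoint_right.mp hdisj hj
  have hexp : ∑ i ∈ Finset.univ, ∑ j ∈ Finset.univ, a i * a j * min (t i) (t j)
      = (∑ i ∈ A, ∑ j ∈ A, M i j) - (∑ i ∈ A, ∑ j ∈ B, M i j)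
        - (∑ i ∈ B, ∑ j ∈ A, M i j) + (∑ i ∈ B, ∑ j ∈ B, M i j) := by
    rw [hsplitU]
    have hinner : ∀ i, ∑ j ∈ Finset.univ, a i * a j * min (t i) (t j)
        = (∑ j ∈ A, a i * a j * min (t i) (t j)) + ∑ j ∈ B, a i * a j * min (t i) (t j) :=
      fun i => hsplitU _
    rw [Finset.sum_congr rfl fun i _ => hinner i,
        Finset.sum_congr (rfl : B = B) fun i _ => hinner i,
        Finset.sum_add_distrib, Finset.sum_add_distrib]
    have hAA : ∑ i ∈ A, ∑ j ∈ A, a i * a j * min (t i) (t j) = ∑ i ∈ A, ∑ j ∈ A, M i j := by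
      refine Finset.sum_congr rfl fun i hi => Finset.sum_congr rfl fun j hj => ?_
      simp only [ha, hi, hj, if_true, hM]; ring
    have hAB : ∑ i ∈ A, ∑ j ∈ B, a i * a j * min (t i) (t j)
        = -∑ i ∈ A, ∑ j ∈ B, M i j := by
      rw [← Finset.sum_neg_distrib]
      refine Finset.sum_congr rfl fun i hi => ?_
      rw [← Finset.sum_neg_distrib]
      refine Finset.sum_congr rfl fun j hj => ?_
      simp only [ha, hi, hnB j hj, if_true, if_false, hM]; ring
    have hBA : ∑ i ∈ B, ∑ j ∈ A, a i * a j * min (t i) (t j)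
        = -∑ i ∈ B, ∑ j ∈ A, M i j := by
      rw [← Finset.sum_neg_distrib]
      refine Finset.sum_congr rfl fun i hi => ?_
      rw [← Finset.sum_neg_distrib]
      refine Finset.sum_congr rfl fun j hj => ?_
      simp only [ha, hnB i hi, hj, if_true, if_false, hM]; ring
    have hBB : ∑ i ∈ B, ∑ j ∈ B, a i * a j * min (t i) (t j) = ∑ i ∈ B, ∑ j ∈ B, M i j := by
      refine Finset.sum_congr rfl fun i hi => Finset.sum_congr rfl fun j hj => ?_
      simp only [ha, hnB i hi, hnB j hj, if_false, hM]; ring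
    rw [hAA, hAB, hBA, hBB]; ring
  rw [hexp] at hpsd
  have hBA' : ∑ i ∈ B, ∑ j ∈ A, M i j = ∑ i ∈ A, ∑ j ∈ B, M i j := by
    rw [Finset.sum_comm]
    exact Finset.sum_congr rfl fun i _ => Finset.sum_congr rfl fun j _ => hMsym j i
  have h2A := sym_le A M hMsym hMnn
  have h2B := sym_le B M hMsym hMnn
  linarith
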